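/- Let J be twice differentiable with J'' < 0 on [0,1], b₁ < b₂ in [0,1], and d(p‖a) = -J(p) + J(a) + (p-a)·J'(a). The unique minimizer over a ∈ [b₁, b₂] of max{d(b₁‖a), d(b₂‖a)} is the point a* satisfying J'(a*) = (J(b₂) - J(b₁))/(b₂ - b₁); at a*, d(b₁‖a*) = d(b₂‖a*). -/

import Mathlib

/-- With `J'' < 0` on `[0,1]` and `b₁ < b₂` in `[0,1]`, the unique minimizer over
`a ∈ [b₁,b₂]` of `max{d(b₁‖a), d(b₂‖a)}` is the point `a*` with
`J'(a*) = (J(b₂)-J(b₁))/(b₂-b₁)`; at `a*` the two endpoint divergences are equal. -/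
theorem minimax_centroid_condition
    (J J' J'' : ℝ → ℝ)
    (hJ : ∀ x ∈ Set.Icc (0:ℝ) 1, HasDerivAt J (J' x) x)
    (hJ' : ∀ x ∈ Set.Icc (0:ℝ) 1, HasDerivAt J' (J'' x) x)
    (hJ'' : ∀ x ∈ Set.Icc (0:ℝ) 1, J'' x < 0)
    (b₁ b₂ : ℝ) (hb₁ : b₁ ∈ Set.Icc (0:ℝ) 1) (hb₂ : b₂ ∈ Set.Icc (0:ℝ) 1)
    (hlt : b₁ < b₂)
    (d : ℝ → ℝ → ℝ)
    (hd : ∀ p a, d p a = -J p + J a + (p - a) * J' a)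
    (astar : ℝ) (hastar : astar ∈ Set.Icc b₁ b₂)
    (hslope : J' astar = (J b₂ - J b₁) / (b₂ - b₁)) :
    d b₁ astar = d b₂ astar ∧
      ∀ a ∈ Set.Icc b₁ b₂, a ≠ astar →
        max (d b₁ astar) (d b₂ astar) < max (d b₁ a) (d b₂ a) := by
  have hne : b₂ - b₁ ≠ 0 := sub_ne_zero.mpr hlt.ne'
  have hsub : Set.Icc b₁ b₂ ⊆ Set.Icc (0:ℝ) 1 := Set.Icc_subset_Icc hb₁.1 hb₂.2
  -- equality of the two divergences at astar
  have heq : d b₁ astar = d b₂ astar := by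
    rw [hd, hd, hslope]
    field_simp
    ring
  refine ⟨heq, ?_⟩
  -- derivative facts
  have hF : ∀ p : ℝ, ∀ x ∈ Set.Icc (0:ℝ) 1,
      HasDerivAt (fun a => -J p + J a + (p - a) * J' a) ((p - x) * J'' x) x := by
    intro p x hx
    have h1 : HasDerivAt (fun a : ℝ => p - a) (-1) x := by
      simpa using (hasDerivAt_id x).const_sub p
    have h2 := h1.mul (hJ' x hx)
    have h3 := ((hJ x hx).const_add (-J p)).add h2
    convert h3 using 1
    exacts [rfl, rfl, rfl, by ring]
  have hcont : ∀ p : ℝ, ContinuousOn (fun a => -J p + J a + (p - a) * J' a) (Set.Icc b₁ b₂) :=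
    fun p => fun x hx => ((hF p x (hsub hx)).continuousAt).continuousWithinAt
  -- d b₁ · is strictly increasing on [b₁,b₂]
  have hmono : StrictMonoOn (fun a => -J b₁ + J a + (b₁ - a) * J' a) (Set.Icc b₁ b₂) := by
    apply strictMonoOn_of_deriv_pos (convex_Icc _ _) (hcont b₁)
    intro x hx
    rw [interior_Icc] at hx
    rw [(hF b₁ x (hsub ⟨hx.1.le, hx.2.le⟩)).deriv]
    exact mul_pos_of_neg_of_neg (by linarith [hx.1]) (hJ'' x (hsub ⟨hx.1.le, hx.2.le⟩))
  -- d b₂ · is strictly decreasing on [b₁,b₂]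
  have hanti : StrictAntiOn (fun a => -J b₂ + J a + (b₂ - a) * J' a) (Set.Icc b₁ b₂) := by
    apply strictAntiOn_of_deriv_neg (convex_Icc _ _) (hcont b₂)
    intro x hx
    rw [interior_Icc] at hx
    rw [(hF b₂ x (hsub ⟨hx.1.le, hx.2.le⟩)).deriv]
    exact mul_neg_of_pos_of_neg (by linarith [hx.2]) (hJ'' x (hsub ⟨hx.1.le, hx.2.le⟩))
  intro a ha hanex
  rcases hanex.lt_or_gt with hlt' | hlt'
  · -- a < astar : d b₂ astar < d b₂ a
    have h := hanti ha hastar hlt'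
    simp only [← hd] at h
    calc max (d b₁ astar) (d b₂ astar) = d b₂ astar := by rw [heq, max_self]
    _ < d b₂ a := h
    _ ≤ max (d b₁ a) (d b₂ a) := le_max_right _ _
  · -- astar < a : d b₁ astar < d b₁ a
    have h := hmono hastar ha hlt'
    simp only [← hd] at h
    calc max (d b₁ astar) (d b₂ astar) = d b₁ astar := by rw [heq, max_self]
    _ < d b₁ a := h
    _ ≤ max (d b₁ a) (d b₂ a) := le_max_left _ _
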